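/- Consider the nine lines in the complex projective plane ℙ²(ℂ) given by the nine linear factors of (x³ − y³)(x³ − z³)(y³ − z³), namely the lines x = ωy, x = ωz, y = ωz for ω ranging over the cube roots of unity. Then this arrangement has no double points and exactly 12 triple points: every point of ℙ²(ℂ) lying on at least two of the nine lines lies on exactly three of them, and the set of such points has exactly 12 elements. -/

import Mathlib

/-- The set of lines of the arrangement given by the nine linear factors of
`(x³ − y³)(x³ − z³)(y³ − z³)` passing through the point with homogeneous coordinates `P`:
a line is encoded as a pair `(ω, k)` with `ω³ = 1`, where `k = 0, 1, 2` encodes the lines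
`x = ωy`, `x = ωz`, `y = ωz` respectively. -/
def linesThrough (P : Fin 3 → ℂ) : Set (ℂ × Fin 3) :=
  {q | q.1 ^ 3 = 1 ∧
    ![P 0 = q.1 * P 1, P 0 = q.1 * P 2, P 1 = q.1 * P 2] q.2}

/-- The number of the nine lines passing through the point `P`. -/
noncomputable def numLines (P : Fin 3 → ℂ) : ℕ :=
  (linesThrough P).ncard

/- ### Auxiliary lemmas -/

open Polynomial in
lemma cubeRoots_coe : {x : ℂ | x ^ 3 = 1} = ↑(nthRootsFinset 3 (1 : ℂ)) := by
  ext x; simp [Polynomial.mem_nthRootsFinset (by norm_num : 0 < 3) (1 : ℂ)]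

open Polynomial in
lemma cubeRoots_ncard : {x : ℂ | x ^ 3 = 1}.ncard = 3 := by
  rw [cubeRoots_coe, Set.ncard_coe_finset,
    (Complex.isPrimitiveRoot_exp 3 (by norm_num)).card_nthRootsFinset]

lemma cubeRoots_finite : ({x : ℂ | x ^ 3 = 1} : Set ℂ).Finite := by
  rw [cubeRoots_coe]; exact (Polynomial.nthRootsFinset 3 (1 : ℂ)).finite_toSet

lemma cubeRoot_ne_zero {x : ℂ} (h : x ^ 3 = 1) : x ≠ 0 := by
  intro h0; rw [h0] at h; norm_num at h

lemma pair_inj (k : Fin 3) : Function.Injective (fun x : ℂ => (x, k)) :=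
  fun _ _ h => congrArg Prod.fst h

lemma triple_ncard (a b c : ℂ) :
    ({(a, 0), (b, 1), (c, 2)} : Set (ℂ × Fin 3)).ncard = 3 := by
  rw [Set.ncard_insert_of_notMem (by simp [Prod.ext_iff]),
    Set.ncard_insert_of_notMem (by simp [Prod.ext_iff]), Set.ncard_singleton]

lemma fin3_mk0 (h : 0 < 3) : (⟨0, h⟩ : Fin 3) = 0 := rfl
lemma fin3_mk1 (h : 1 < 3) : (⟨1, h⟩ : Fin 3) = 1 := rfl
lemma fin3_mk2 (h : 2 < 3) : (⟨2, h⟩ : Fin 3) = 2 := rfl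

lemma vec3_mk2' {α : Type*} (a b c : α) (h : 2 < 3) : ![a, b, c] ⟨2, h⟩ = c := rfl

lemma linesThrough_finite (v : Fin 3 → ℂ) : (linesThrough v).Finite := by
  have hsub : linesThrough v ⊆ {x : ℂ | x ^ 3 = 1} ×ˢ (Set.univ : Set (Fin 3)) := by
    rintro ⟨ω, k⟩ ⟨h, -⟩; exact ⟨h, trivial⟩
  exact Set.Finite.subset (Set.Finite.prod cubeRoots_finite Set.finite_univ) hsub

lemma mem_lt_iff {v : Fin 3 → ℂ} {ω : ℂ} {k : Fin 3} :
    (ω, k) ∈ linesThrough v ↔ ω ^ 3 = 1 ∧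
      ((k = 0 → v 0 = ω * v 1) ∧ (k = 1 → v 0 = ω * v 2) ∧ (k = 2 → v 1 = ω * v 2)) := by
  constructor
  · rintro ⟨hω, hk⟩
    refine ⟨hω, ?_, ?_, ?_⟩ <;> rintro rfl <;> simpa [linesThrough] using hk
  · rintro ⟨hω, h0, h1, h2⟩
    refine ⟨hω, ?_⟩
    fin_cases k
    · simpa using h0 rfl
    · simpa using h1 rfl
    · simpa [vec3_mk2'] using h2 rfl

/- ### scaling invariance -/

lemma linesThrough_smul {c : ℂ} (hc : c ≠ 0) (v : Fin 3 → ℂ) :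
    linesThrough (c • v) = linesThrough v := by
  have key : ∀ ω a b : ℂ, (c * a = ω * (c * b)) ↔ (a = ω * b) := by
    intro ω a b
    rw [show ω * (c * b) = c * (ω * b) by ring, mul_right_inj' hc]
  ext ⟨ω, k⟩
  fin_cases k <;>
    simp only [linesThrough, Set.mem_setOf_eq, Pi.smul_apply, smul_eq_mul,
      Matrix.cons_val_zero, Matrix.cons_val_one, Matrix.head_cons, Fin.mk_one,
      Matrix.cons_val_two, Matrix.tail_cons, key]

lemma numLines_mk (v : Fin 3 → ℂ) (hv : v ≠ 0) :
    numLines ((Projectivization.mk ℂ v hv).rep) = numLines v := by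
  obtain ⟨a, ha⟩ := Projectivization.exists_smul_eq_mk_rep ℂ v hv
  rw [← ha]
  unfold numLines
  rw [Units.smul_def, linesThrough_smul a.ne_zero]

/- ### Description of `linesThrough` in the various cases -/

lemma lt_zz01 {v : Fin 3 → ℂ} (h0 : v 0 = 0) (h1 : v 1 = 0) (h2 : v 2 ≠ 0) :
    linesThrough v = (fun x => (x, (0 : Fin 3))) '' {x : ℂ | x ^ 3 = 1} := by
  ext ⟨ω, k⟩
  simp only [linesThrough, Set.mem_setOf_eq, Set.mem_image, Prod.mk.injEq]
  constructor
  · rintro ⟨hω, hk⟩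
    refine ⟨ω, hω, rfl, ?_⟩
    fin_cases k
    · rfl
    · exfalso; simp only [Matrix.cons_val_one, Matrix.head_cons, h0] at hk
      exact h2 (by simpa [cubeRoot_ne_zero hω] using hk.symm)
    · exfalso; simp only [Matrix.cons_val_two, Matrix.tail_cons, Matrix.head_cons, h1] at hk
      exact h2 (by simpa [cubeRoot_ne_zero hω] using hk.symm)
  · rintro ⟨x, hx, rfl, rfl⟩
    exact ⟨hx, by simp [h0, h1]⟩

lemma lt_zz02 {v : Fin 3 → ℂ} (h0 : v 0 = 0) (h2 : v 2 = 0) (h1 : v 1 ≠ 0) :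
    linesThrough v = (fun x => (x, (1 : Fin 3))) '' {x : ℂ | x ^ 3 = 1} := by
  ext ⟨ω, k⟩
  simp only [linesThrough, Set.mem_setOf_eq, Set.mem_image, Prod.mk.injEq]
  constructor
  · rintro ⟨hω, hk⟩
    refine ⟨ω, hω, rfl, ?_⟩
    fin_cases k
    · exfalso; simp only [Matrix.cons_val_zero, h0] at hk
      exact h1 (by simpa [cubeRoot_ne_zero hω] using hk.symm)
    · rfl
    · exfalso; simp only [Matrix.cons_val_two, Matrix.tail_cons, Matrix.head_cons, h2] at hk
      exact h1 (by simpa [cubeRoot_ne_zero hω, hk] using hk)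
  · rintro ⟨x, hx, rfl, rfl⟩
    exact ⟨hx, by simp [h0, h2]⟩

lemma lt_zz12 {v : Fin 3 → ℂ} (h1 : v 1 = 0) (h2 : v 2 = 0) (h0 : v 0 ≠ 0) :
    linesThrough v = (fun x => (x, (2 : Fin 3))) '' {x : ℂ | x ^ 3 = 1} := by
  ext ⟨ω, k⟩
  simp only [linesThrough, Set.mem_setOf_eq, Set.mem_image, Prod.mk.injEq]
  constructor
  · rintro ⟨hω, hk⟩
    refine ⟨ω, hω, rfl, ?_⟩
    fin_cases k
    · exfalso; simp only [Matrix.cons_val_zero, h1] at hk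
      exact h0 (by simpa using hk)
    · exfalso; simp only [Matrix.cons_val_one, Matrix.head_cons, h2] at hk
      exact h0 (by simpa using hk)
    · rfl
  · rintro ⟨x, hx, rfl, rfl⟩
    exact ⟨hx, by simp [h1, h2]⟩

lemma lt_nz {v : Fin 3 → ℂ} (h0 : v 0 ≠ 0) (h1 : v 1 ≠ 0) (h2 : v 2 ≠ 0)
    (e01 : v 0 ^ 3 = v 1 ^ 3) (e02 : v 0 ^ 3 = v 2 ^ 3) :
    linesThrough v = {(v 0 / v 1, 0), (v 0 / v 2, 1), (v 1 / v 2, 2)} := by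
  have e12 : v 1 ^ 3 = v 2 ^ 3 := e01 ▸ e02
  ext ⟨ω, k⟩
  simp only [linesThrough, Set.mem_setOf_eq, Set.mem_insert_iff, Set.mem_singleton_iff,
    Prod.mk.injEq]
  fin_cases k <;>
    simp only [fin3_mk0, fin3_mk1, fin3_mk2, Matrix.cons_val_zero, Matrix.cons_val_one,
      Matrix.head_cons, Matrix.cons_val_two, Matrix.tail_cons, vec3_mk2'] <;>
    constructor
  · rintro ⟨hω, hk⟩
    exact Or.inl ⟨by field_simp [hk]; exact hk.symm, by simp⟩
  · rintro (⟨rfl, -⟩ | ⟨-, h⟩ | ⟨-, h⟩)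
    · exact ⟨by field_simp [div_pow, e01]; exact e01, by field_simp⟩
    all_goals exact absurd h (by decide)
  · rintro ⟨hω, hk⟩
    exact Or.inr (Or.inl ⟨by field_simp [hk]; exact hk.symm, by simp⟩)
  · rintro (⟨-, h⟩ | ⟨rfl, -⟩ | ⟨-, h⟩)
    · exact absurd h (by decide)
    · exact ⟨by field_simp [div_pow, e02]; exact e02, by field_simp⟩
    · exact absurd h (by decide)
  · rintro ⟨hω, hk⟩
    exact Or.inr (Or.inr ⟨by field_simp [hk]; exact hk.symm, trivial⟩)
  · rintro (⟨-, h⟩ | ⟨-, h⟩ | ⟨rfl, -⟩)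
    · exact absurd h (by decide)
    · exact absurd h (by decide)
    · exact ⟨by field_simp [div_pow, e12]; exact e12, by field_simp⟩

/- ### Classification of points on at least two lines -/

lemma classify {v : Fin 3 → ℂ} (hv : v ≠ 0) (hn : 2 ≤ numLines v) :
    (v 0 = 0 ∧ v 1 = 0 ∧ v 2 ≠ 0) ∨ (v 0 = 0 ∧ v 2 = 0 ∧ v 1 ≠ 0) ∨
    (v 1 = 0 ∧ v 2 = 0 ∧ v 0 ≠ 0) ∨
    (v 0 ≠ 0 ∧ v 1 ≠ 0 ∧ v 2 ≠ 0 ∧ v 0 ^ 3 = v 1 ^ 3 ∧ v 0 ^ 3 = v 2 ^ 3) := by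
  have hsing : ∀ q : ℂ × Fin 3, linesThrough v ⊆ {q} → False := by
    intro q hsub
    have := Set.ncard_le_ncard hsub (Set.finite_singleton q)
    rw [Set.ncard_singleton] at this
    unfold numLines at hn
    omega
  by_cases h0 : v 0 = 0 <;> by_cases h1 : v 1 = 0 <;> by_cases h2 : v 2 = 0
  · exact absurd (funext fun i => by fin_cases i <;> assumption) hv
  · exact Or.inl ⟨h0, h1, h2⟩
  · exact Or.inr (Or.inl ⟨h0, h2, h1⟩)
  · -- v0 = 0, v1 ≠ 0, v2 ≠ 0 : at most one line
    exfalso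
    refine hsing (v 1 / v 2, 2) ?_
    rintro ⟨ω, k⟩ hq
    rw [mem_lt_iff] at hq
    obtain ⟨hω, hk0, hk1, hk2⟩ := hq
    have hωz := cubeRoot_ne_zero hω
    fin_cases k
    · exact absurd (hk0 rfl) (by simp [h0, hωz, h1])
    · exact absurd (hk1 rfl) (by simp [h0, hωz, h2])
    · have := hk2 rfl
      simp only [Set.mem_singleton_iff, Prod.mk.injEq]
      exact ⟨by field_simp [this]; exact this.symm, rfl⟩
  · exact Or.inr (Or.inr (Or.inl ⟨h1, h2, h0⟩))
  · -- v1 = 0, v0 ≠ 0, v2 ≠ 0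
    exfalso
    refine hsing (v 0 / v 2, 1) ?_
    rintro ⟨ω, k⟩ hq
    rw [mem_lt_iff] at hq
    obtain ⟨hω, hk0, hk1, hk2⟩ := hq
    have hωz := cubeRoot_ne_zero hω
    fin_cases k
    · exact absurd (hk0 rfl) (by simp [h1, h0])
    · have := hk1 rfl
      simp only [Set.mem_singleton_iff, Prod.mk.injEq]
      exact ⟨by field_simp [this]; exact this.symm, rfl⟩
    · exact absurd (hk2 rfl) (by simp [h1, hωz, h2])
  · -- v2 = 0, v0 ≠ 0, v1 ≠ 0
    exfalso
    refine hsing (v 0 / v 1, 0) ?_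
    rintro ⟨ω, k⟩ hq
    rw [mem_lt_iff] at hq
    obtain ⟨hω, hk0, hk1, hk2⟩ := hq
    have hωz := cubeRoot_ne_zero hω
    fin_cases k
    · have := hk0 rfl
      simp only [Set.mem_singleton_iff, Prod.mk.injEq]
      exact ⟨by field_simp [this]; exact this.symm, rfl⟩
    · exact absurd (hk1 rfl) (by simp [h2, h0])
    · exact absurd (hk2 rfl) (by simp [h2, h1])
  · -- all nonzero
    refine Or.inr (Or.inr (Or.inr ⟨h0, h1, h2, ?_⟩))
    have h2n : 1 < (linesThrough v).ncard := hn
    obtain ⟨q, q', hq, hq', hne⟩ :=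
      (Set.one_lt_ncard_iff (linesThrough_finite v)).mp h2n
    obtain ⟨ω, k⟩ := q
    obtain ⟨ω', k'⟩ := q'
    rw [mem_lt_iff] at hq hq'
    obtain ⟨hω, ha0, ha1, ha2⟩ := hq
    obtain ⟨hω', hb0, hb1, hb2⟩ := hq'
    have cube : ∀ {x y z : ℂ}, z ^ 3 = 1 → x = z * y → x ^ 3 = y ^ 3 := by
      intro x y z hz hx; rw [hx, mul_pow, hz, one_mul]
    have hkk : k ≠ k' := by
      rintro rfl
      apply hne
      have : ω = ω' := by
        fin_cases k
        · have a := ha0 rfl; have b := hb0 rfl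
          exact mul_right_cancel₀ h1 (a.symm.trans b)
        · have a := ha1 rfl; have b := hb1 rfl
          exact mul_right_cancel₀ h2 (a.symm.trans b)
        · have a := ha2 rfl; have b := hb2 rfl
          exact mul_right_cancel₀ h2 (a.symm.trans b)
      rw [this]
    have e01 : k = 0 ∨ k' = 0 → v 0 ^ 3 = v 1 ^ 3 := by
      rintro (rfl | rfl)
      exacts [cube hω (ha0 rfl), cube hω' (hb0 rfl)]
    have e02 : k = 1 ∨ k' = 1 → v 0 ^ 3 = v 2 ^ 3 := by
      rintro (rfl | rfl)
      exacts [cube hω (ha1 rfl), cube hω' (hb1 rfl)]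
    have e12 : k = 2 ∨ k' = 2 → v 1 ^ 3 = v 2 ^ 3 := by
      rintro (rfl | rfl)
      exacts [cube hω (ha2 rfl), cube hω' (hb2 rfl)]
    fin_cases k <;> fin_cases k'
    · exact absurd rfl hkk
    · exact ⟨e01 (Or.inl rfl), e02 (Or.inr rfl)⟩
    · have a := e01 (Or.inl rfl); have b := e12 (Or.inr rfl)
      exact ⟨a, a.trans b⟩
    · exact ⟨e01 (Or.inr rfl), e02 (Or.inl rfl)⟩
    · exact absurd rfl hkk
    · have a := e02 (Or.inl rfl); have b := e12 (Or.inr rfl)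
      exact ⟨a.trans b.symm, a⟩
    · have a := e12 (Or.inl rfl); have b := e01 (Or.inr rfl)
      exact ⟨b, b.trans a⟩
    · have a := e12 (Or.inl rfl); have b := e02 (Or.inr rfl)
      exact ⟨b.trans a.symm, b⟩
    · exact absurd rfl hkk

lemma numLines_eq_three_of_classify {v : Fin 3 → ℂ}
    (h : (v 0 = 0 ∧ v 1 = 0 ∧ v 2 ≠ 0) ∨ (v 0 = 0 ∧ v 2 = 0 ∧ v 1 ≠ 0) ∨
    (v 1 = 0 ∧ v 2 = 0 ∧ v 0 ≠ 0) ∨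
    (v 0 ≠ 0 ∧ v 1 ≠ 0 ∧ v 2 ≠ 0 ∧ v 0 ^ 3 = v 1 ^ 3 ∧ v 0 ^ 3 = v 2 ^ 3)) :
    numLines v = 3 := by
  rcases h with ⟨h0, h1, h2⟩ | ⟨h0, h2, h1⟩ | ⟨h1, h2, h0⟩ | ⟨h0, h1, h2, e01, e02⟩
  · rw [numLines, lt_zz01 h0 h1 h2, Set.ncard_image_of_injective _ (pair_inj _), cubeRoots_ncard]
  · rw [numLines, lt_zz02 h0 h2 h1, Set.ncard_image_of_injective _ (pair_inj _), cubeRoots_ncard]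
  · rw [numLines, lt_zz12 h1 h2 h0, Set.ncard_image_of_injective _ (pair_inj _), cubeRoots_ncard]
  · rw [numLines, lt_nz h0 h1 h2 e01 e02, triple_ncard]

/- ### The twelve points -/

noncomputable def ptCoord : Fin 3 → Projectivization ℂ (Fin 3 → ℂ) := fun i =>
  Projectivization.mk ℂ (fun j => if j = i then 1 else 0) (by
    intro h
    have := congrFun h i
    simp at this)

noncomputable def ptRoot : ({x : ℂ | x ^ 3 = 1} × {x : ℂ | x ^ 3 = 1}) →
    Projectivization ℂ (Fin 3 → ℂ) := fun w =>
  Projectivization.mk ℂ ![1, w.1.1, w.2.1] (by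
    intro h
    have := congrFun h 0
    simp at this)

lemma ptCoord_ne_ptRoot (i : Fin 3) (w : {x : ℂ | x ^ 3 = 1} × {x : ℂ | x ^ 3 = 1}) :
    ptCoord i ≠ ptRoot w := by
  intro h
  simp only [ptCoord, ptRoot] at h
  rw [Projectivization.mk_eq_mk_iff'] at h
  obtain ⟨a, ha⟩ := h
  have hω := cubeRoot_ne_zero w.1.2
  have hω' := cubeRoot_ne_zero w.2.2
  have u0 := congrFun ha 0
  have u1 := congrFun ha 1
  have u2 := congrFun ha 2
  fin_cases i
  · simp only [fin3_mk0, Pi.smul_apply, smul_eq_mul, Matrix.cons_val_zero,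
      Matrix.cons_val_one, Matrix.head_cons, mul_one] at u0 u1
    simp at u0 u1
    rcases u1 with hc | hc
    · rw [u0] at hc; exact one_ne_zero hc
    · exact hω hc
  · simp only [fin3_mk1, Pi.smul_apply, smul_eq_mul, Matrix.cons_val_zero,
      Matrix.cons_val_one, Matrix.head_cons, mul_one] at u0 u1
    simp at u0 u1
    rw [u0, zero_mul] at u1
    exact zero_ne_one u1
  · simp only [fin3_mk2, Pi.smul_apply, smul_eq_mul, Matrix.cons_val_zero,
      Matrix.cons_val_two, Matrix.tail_cons, Matrix.head_cons, mul_one] at u0 u2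
    rw [if_neg (by decide)] at u0
    rw [if_pos trivial] at u2
    rw [u0, zero_mul] at u2
    exact zero_ne_one u2

lemma twelve_inj : Function.Injective (Sum.elim ptCoord ptRoot) := by
  rintro (i | w) (i' | w') h
  · simp only [Sum.elim_inl, ptCoord] at h
    rw [Projectivization.mk_eq_mk_iff'] at h
    obtain ⟨a, ha⟩ := h
    congr 1
    by_contra hii
    have u := congrFun ha i
    simp only [Pi.smul_apply, smul_eq_mul] at u
    rw [if_neg hii] at u
    simp at u
  · exact absurd (by simpa using h) (ptCoord_ne_ptRoot i w')
  · exact absurd (by simpa using h.symm) (ptCoord_ne_ptRoot i' w)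
  · simp only [Sum.elim_inr, ptRoot] at h
    rw [Projectivization.mk_eq_mk_iff'] at h
    obtain ⟨a, ha⟩ := h
    have u0 := congrFun ha 0
    have u1 := congrFun ha 1
    have u2 := congrFun ha 2
    simp only [Pi.smul_apply, smul_eq_mul, Matrix.cons_val_zero, Matrix.cons_val_one,
      Matrix.head_cons, Matrix.cons_val_two, Matrix.tail_cons, mul_one] at u0 u1 u2
    rw [u0, one_mul] at u1 u2
    congr 1
    exact Prod.ext (Subtype.ext u1.symm) (Subtype.ext u2.symm)

lemma range_eq : {p : Projectivization ℂ (Fin 3 → ℂ) | 2 ≤ numLines p.rep} =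
    Set.range (Sum.elim ptCoord ptRoot) := by
  ext p
  simp only [Set.mem_setOf_eq, Set.mem_range]
  constructor
  · intro hp
    have hv := p.rep_nonzero
    rcases classify hv hp with ⟨h0, h1, h2⟩ | ⟨h0, h2, h1⟩ | ⟨h1, h2, h0⟩ |
      ⟨h0, h1, h2, e01, e02⟩
    · refine ⟨Sum.inl 2, ?_⟩
      simp only [Sum.elim_inl]
      conv_rhs => rw [← p.mk_rep]
      simp only [ptCoord]
      rw [Projectivization.mk_eq_mk_iff']
      refine ⟨(p.rep 2)⁻¹, funext fun j => ?_⟩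
      fin_cases j <;>
        simp [fin3_mk0, fin3_mk1, fin3_mk2, h0, h1, inv_mul_cancel₀ h2]
    · refine ⟨Sum.inl 1, ?_⟩
      simp only [Sum.elim_inl]
      conv_rhs => rw [← p.mk_rep]
      simp only [ptCoord]
      rw [Projectivization.mk_eq_mk_iff']
      refine ⟨(p.rep 1)⁻¹, funext fun j => ?_⟩
      fin_cases j <;>
        simp [fin3_mk0, fin3_mk1, fin3_mk2, h0, h2, inv_mul_cancel₀ h1]
    · refine ⟨Sum.inl 0, ?_⟩
      simp only [Sum.elim_inl]
      conv_rhs => rw [← p.mk_rep]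
      simp only [ptCoord]
      rw [Projectivization.mk_eq_mk_iff']
      refine ⟨(p.rep 0)⁻¹, funext fun j => ?_⟩
      fin_cases j <;>
        simp [fin3_mk0, fin3_mk1, fin3_mk2, h1, h2, inv_mul_cancel₀ h0]
    · refine ⟨Sum.inr (⟨p.rep 1 / p.rep 0, ?_⟩, ⟨p.rep 2 / p.rep 0, ?_⟩), ?_⟩
      · show (p.rep 1 / p.rep 0) ^ 3 = 1
        rw [div_pow, ← e01, div_self (pow_ne_zero _ h0)]
      · show (p.rep 2 / p.rep 0) ^ 3 = 1
        rw [div_pow, ← e02, div_self (pow_ne_zero _ h0)]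
      · simp only [Sum.elim_inr]
        conv_rhs => rw [← p.mk_rep]
        simp only [ptRoot]
        rw [Projectivization.mk_eq_mk_iff']
        refine ⟨(p.rep 0)⁻¹, funext fun j => ?_⟩
        fin_cases j <;>
          simp [fin3_mk0, fin3_mk1, fin3_mk2, inv_mul_cancel₀ h0, inv_mul_eq_div]
  · rintro ⟨y, rfl⟩
    rcases y with i | w
    · simp only [Sum.elim_inl, ptCoord]
      rw [numLines_mk]
      have h3 : numLines (fun j => if j = i then (1 : ℂ) else 0) = 3 := by
        apply numLines_eq_three_of_classify
        fin_cases i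
        · exact Or.inr (Or.inr (Or.inl
            ⟨if_neg (by decide), if_neg (by decide), by simp⟩))
        · exact Or.inr (Or.inl ⟨if_neg (by decide), if_neg (by decide), by simp⟩)
        · exact Or.inl ⟨if_neg (by decide), if_neg (by decide), by simp⟩
      omega
    · simp only [Sum.elim_inr, ptRoot]
      rw [numLines_mk]
      have h3 : numLines ![1, w.1.1, w.2.1] = 3 := by
        apply numLines_eq_three_of_classify
        refine Or.inr (Or.inr (Or.inr ?_))
        have hω := w.1.2
        have hω' := w.2.2
        simp only [Set.mem_setOf_eq] at hω hω'
        refine ⟨?_, ?_, ?_, ?_, ?_⟩ <;>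
          simp [cubeRoot_ne_zero hω, cubeRoot_ne_zero hω', hω, hω']
      omega

/-- the arrangement of the nine lines given by the linear factors of
`(x³ − y³)(x³ − z³)(y³ − z³)` in `ℙ²(ℂ)` has no double points and exactly 12 triple points:
every point lying on at least two of the lines lies on exactly three of them, and the set of
such points has exactly 12 elements. -/
theorem stmt9 :
    (∀ p : Projectivization ℂ (Fin 3 → ℂ),
      2 ≤ numLines p.rep → numLines p.rep = 3) ∧
    {p : Projectivization ℂ (Fin 3 → ℂ) | 2 ≤ numLines p.rep}.ncard = 12 := by
  constructor
  · intro p hp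
    exact numLines_eq_three_of_classify (classify p.rep_nonzero hp)
  · rw [range_eq, ← Nat.card_coe_set_eq, Nat.card_range_of_injective twelve_inj]
    haveI : Finite ({x : ℂ | x ^ 3 = 1} : Set ℂ) := cubeRoots_finite.to_subtype
    rw [Nat.card_sum, Nat.card_prod, Nat.card_coe_set_eq, cubeRoots_ncard,
      Nat.card_eq_fintype_card, Fintype.card_fin]
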